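/- Let $p(\cdot)\in\mathcal{P}(\mathbb{R}^n)\cap LH(\mathbb{R}^n)$, $0<r<1$ with $rp_->1$, and $w\in A_{rp(\cdot)}$. Then for all integers $l\le k$, $\frac{\|\chi_{B_k}\|_{L^{p(\cdot)}(w)}}{\|\chi_{B_l}\|_{L^{p(\cdot)}(w)}} \le C\,2^{(k-l)nr}$, where $B_j=\{|x|\le 2^j\}$, using the identity $\|\chi_E\|_{L^{p(\cdot)}(w)} = \|\chi_E\|_{L^{rp(\cdot)}(w)}^{r}$ for measurable sets $E$, and the estimate $|E|/|B| \le C\|\chi_E\|_{L^{rp(\cdot)}(w)}/\|\chi_B\|_{L^{rp(\cdot)}(w)}$ valid when $M$ is weakly bounded on $L^{rp(\cdot)}(w)$. -/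

import Mathlib

open MeasureTheory Metric Set ENNReal NNReal Filter

noncomputable section

abbrev Rn (n : ℕ) := EuclideanSpace ℝ (Fin n)

/-- The (extended) Hardy--Littlewood maximal operator for `ℝ≥0∞`-valued functions. -/
def HLmaxE {n : ℕ} (f : Rn n → ℝ≥0∞) (x : Rn n) : ℝ≥0∞ :=
  ⨆ (c : Rn n) (r : ℝ) (_ : 0 < r) (_ : x ∈ ball c r),
    (∫⁻ y in ball c r, f y) / volume (ball c r)

/-- The Luxemburg norm of the variable exponent Lebesgue space `L^{p(·)}`. -/
def varNorm {n : ℕ} (p : Rn n → ℝ) (f : Rn n → ℝ≥0∞) : ℝ≥0∞ :=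
  sInf {lam : ℝ≥0∞ | 0 < lam ∧ (∫⁻ x, (f x / lam) ^ p x) ≤ 1}

/-- The norm of the weighted variable exponent Lebesgue space `L^{p(·)}(w)`,
`‖f‖ = ‖f w^{1/p(·)}‖_{L^{p(·)}}`. -/
def wNorm {n : ℕ} (p : Rn n → ℝ) (w : Rn n → ℝ) (f : Rn n → ℝ≥0∞) : ℝ≥0∞ :=
  varNorm p (fun x => f x * ENNReal.ofReal (w x ^ (1 / p x)))

/-- The class `𝒫(ℝⁿ)`: measurable exponents with `1 < p₋ ≤ p₊ < ∞`. -/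
def isPclass {n : ℕ} (p : Rn n → ℝ) : Prop :=
  Measurable p ∧ ∃ pm pp : ℝ, 1 < pm ∧ ∀ x, pm ≤ p x ∧ p x ≤ pp

/-- Global log-Hölder continuity. -/
def isLH {n : ℕ} (p : Rn n → ℝ) : Prop :=
  (∃ C : ℝ, 0 < C ∧ ∀ x y : Rn n, 0 < dist x y → dist x y ≤ 1 / 2 →
      |p x - p y| ≤ C / (-Real.log (dist x y))) ∧
  (∃ C pinf : ℝ, 0 < C ∧ ∀ x : Rn n,
      |p x - pinf| ≤ C / Real.log (Real.exp 1 + ‖x‖))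

/-- The Muckenhoupt class `A_{p(·)}` with variable exponent:
`sup_B |B|⁻¹ ‖w^{1/p(·)} χ_B‖_{L^{p(·)}} ‖w^{-1/p(·)} χ_B‖_{L^{p'(·)}} < ∞`. -/
def isMuckenhoupt {n : ℕ} (p : Rn n → ℝ) (w : Rn n → ℝ) : Prop :=
  (⨆ (c : Rn n) (r : ℝ) (_ : 0 < r),
      varNorm p ((ball c r).indicator (fun x => ENNReal.ofReal (w x ^ (1 / p x)))) *
        varNorm (fun x => p x / (p x - 1))
          ((ball c r).indicator (fun x => ENNReal.ofReal (w x ^ (-(1 / p x)))))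
        / volume (ball c r)) < ∞

/-- The ball `B_k = {|x| ≤ 2^k}`. -/
def Bk {n : ℕ} (k : ℤ) : Set (Rn n) := Metric.closedBall 0 ((2 : ℝ) ^ k)

lemma varNorm_mono {n : ℕ} (p : Rn n → ℝ) (hp : ∀ x, 0 ≤ p x) {f g : Rn n → ℝ≥0∞}
    (hfg : ∀ x, f x ≤ g x) : varNorm p f ≤ varNorm p g := by
  apply sInf_le_sInf
  rintro lam ⟨h1, h2⟩
  refine ⟨h1, le_trans (lintegral_mono fun x => ?_) h2⟩
  exact ENNReal.rpow_le_rpow (ENNReal.div_le_div_right (hfg x) lam) (hp x)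

lemma varNorm_indicator_pos {n : ℕ} (p : Rn n → ℝ) (pm : ℝ) (hpm : 0 < pm)
    (hp : ∀ x, pm ≤ p x) (A : Set (Rn n)) (hA : MeasurableSet A) (hApos : 0 < volume A)
    (h : Rn n → ℝ≥0∞) (hmeas : Measurable h) (hpos : ∀ x, 0 < h x) :
    varNorm p (A.indicator h) ≠ 0 := by
  -- find a piece where h is bounded below
  have hcover : A ⊆ ⋃ m : ℕ, A ∩ {x | ((m : ℝ≥0∞) + 1)⁻¹ ≤ h x} := by
    intro x hx
    obtain ⟨m, hm⟩ := ENNReal.exists_inv_nat_lt (hpos x).ne'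
    refine mem_iUnion.mpr ⟨m, hx, le_trans ?_ hm.le⟩
    exact ENNReal.inv_le_inv.mpr (le_add_of_nonneg_right zero_le_one)
  have hex : ∃ m : ℕ, 0 < volume (A ∩ {x | ((m : ℝ≥0∞) + 1)⁻¹ ≤ h x}) := by
    by_contra hc
    push_neg at hc
    have h0 : volume (⋃ m : ℕ, A ∩ {x | ((m : ℝ≥0∞) + 1)⁻¹ ≤ h x}) = 0 := by
      refine measure_iUnion_null fun m => le_antisymm (hc m) zero_le
    exact absurd (le_trans (measure_mono hcover) h0.le) (by simpa using hApos.ne')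
  obtain ⟨m, hδ⟩ := hex
  set b : ℝ≥0∞ := ((m : ℝ≥0∞) + 1)⁻¹ with hbdef
  set Am : Set (Rn n) := {x | b ≤ h x} with hAmdef
  set δ : ℝ≥0∞ := volume (A ∩ Am) with hδdef
  have hb0 : b ≠ 0 := ENNReal.inv_ne_zero.mpr (by simp)
  have hb1 : b ≤ 1 := by
    rw [hbdef]
    exact ENNReal.inv_le_one.mpr (le_add_self)
  obtain ⟨j, hj⟩ := ENNReal.exists_nat_gt (ENNReal.inv_ne_top.mpr hδ.ne')
  set c : ℝ≥0∞ := ((j : ℝ≥0∞) + 1) ^ (1 / pm) with hcdef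
  have hj1 : (1 : ℝ≥0∞) ≤ (j : ℝ≥0∞) + 1 := le_add_self
  have hc1 : (1 : ℝ≥0∞) ≤ c := by
    calc (1 : ℝ≥0∞) = 1 ^ (1 / pm) := (ENNReal.one_rpow _).symm
    _ ≤ c := ENNReal.rpow_le_rpow hj1 (by positivity)
  have hc0 : c ≠ 0 := (zero_lt_one.trans_le hc1).ne'
  have hctop : c ≠ ⊤ :=
    ENNReal.rpow_ne_top_of_nonneg (by positivity) (by simp)
  have hcpow : c ^ pm = (j : ℝ≥0∞) + 1 := by
    rw [hcdef, ← ENNReal.rpow_mul, one_div_mul_cancel hpm.ne', ENNReal.rpow_one]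
  set μ0 : ℝ≥0∞ := b / c with hμ0def
  have hμ0 : 0 < μ0 := ENNReal.div_pos hb0 hctop
  have hle : μ0 ≤ varNorm p (A.indicator h) := by
    apply le_sInf
    rintro lam ⟨hlam0, hlamI⟩
    by_contra hlt
    push_neg at hlt
    have hlam1 : lam < 1 := lt_of_lt_of_le hlt (le_trans (ENNReal.div_le_div hb1 hc1) (by simp))
    have hlamtop : lam ≠ ⊤ := (hlam1.trans_le le_top).ne
    have hkey : ∀ x ∈ A ∩ Am, c ≤ h x / lam := by
      rintro x ⟨hxA, hxm⟩
      have h1 : c * lam ≤ b := by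
        calc c * lam = lam * c := mul_comm _ _
        _ ≤ b / c * c := mul_le_mul_left hlt.le c
        _ = b := ENNReal.div_mul_cancel hc0 hctop
      have h2 : c ≤ b / lam := by
        calc c = c * lam / lam := by
              rw [mul_div_assoc, ENNReal.div_self hlam0.ne' hlamtop, mul_one]
        _ ≤ b / lam := ENNReal.div_le_div_right h1 lam
      exact h2.trans (ENNReal.div_le_div_right hxm lam)
    have hAmMeas : MeasurableSet (A ∩ Am) :=
      hA.inter (measurableSet_le measurable_const hmeas)
    have hint : ∀ x, (A ∩ Am).indicator (fun _ => (j : ℝ≥0∞) + 1) x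
        ≤ (A.indicator h x / lam) ^ p x := by
      intro x
      by_cases hx : x ∈ A ∩ Am
      · rw [Set.indicator_of_mem hx, Set.indicator_of_mem hx.1]
        calc ((j : ℝ≥0∞) + 1) = c ^ pm := hcpow.symm
        _ ≤ (h x / lam) ^ pm := ENNReal.rpow_le_rpow (hkey x hx) hpm.le
        _ ≤ (h x / lam) ^ p x :=
            ENNReal.rpow_le_rpow_of_exponent_le (hc1.trans (hkey x hx)) (hp x)
      · rw [Set.indicator_of_notMem hx]; exact zero_le
    have hcontr : ((j : ℝ≥0∞) + 1) * δ ≤ 1 := by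
      calc ((j : ℝ≥0∞) + 1) * δ
          = ∫⁻ x, (A ∩ Am).indicator (fun _ => (j : ℝ≥0∞) + 1) x :=
            (lintegral_indicator_const hAmMeas _).symm
      _ ≤ ∫⁻ x, (A.indicator h x / lam) ^ p x := lintegral_mono hint
      _ ≤ 1 := hlamI
    have hgt : 1 < ((j : ℝ≥0∞) + 1) * δ := by
      by_cases hδtop : δ = ⊤
      · rw [hδtop, ENNReal.mul_top (by simp)]; exact one_lt_top
      · have h3 : δ⁻¹ * δ < ((j : ℝ≥0∞) + 1) * δ :=
          ENNReal.mul_lt_mul_left hδ.ne' hδtop (hj.trans_le le_self_add)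
        rwa [ENNReal.inv_mul_cancel hδ.ne' hδtop] at h3
    exact absurd hcontr (not_le.mpr hgt)
  exact fun h0 => absurd (h0 ▸ hle) (by simpa using hμ0.ne')

lemma le_two_mul_sInf_sInf {v : ℝ≥0∞} {S S' : Set ℝ≥0∞}
    (hS : ∀ lam ∈ S, 0 < lam) (ha : sInf S ≠ 0) (hb : sInf S' ≠ 0)
    (h : ∀ lam ∈ S, ∀ mu ∈ S', v ≤ 2 * (lam * mu)) :
    v ≤ 2 * (sInf S * sInf S') := by
  have step1 : ∀ lam ∈ S, v ≤ 2 * (lam * sInf S') := by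
    intro lam hlam
    by_cases htop : lam = ⊤
    · rw [htop, ENNReal.top_mul hb, ENNReal.mul_top (by simp)]
      exact le_top
    · have hl0 : lam ≠ 0 := (hS lam hlam).ne'
      have h2 : v / (2 * lam) ≤ sInf S' := by
        apply le_sInf
        intro mu hmu
        exact ENNReal.div_le_of_le_mul (by
          calc v ≤ 2 * (lam * mu) := h lam hlam mu hmu
          _ = mu * (2 * lam) := by ring)
      have h2lam0 : (2 : ℝ≥0∞) * lam ≠ 0 := by simp [hl0]
      have h2lamtop : (2 : ℝ≥0∞) * lam ≠ ⊤ := by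
        simp [ENNReal.mul_eq_top, htop]
      calc v ≤ sInf S' * (2 * lam) := (ENNReal.div_le_iff h2lam0 h2lamtop).mp h2
      _ = 2 * (lam * sInf S') := by ring
  by_cases hbtop : sInf S' = ⊤
  · rw [hbtop, ENNReal.mul_top ha]
    exact le_trans le_top (le_of_eq (ENNReal.mul_top (by simp)).symm)
  · have h2b0 : (2 : ℝ≥0∞) * sInf S' ≠ 0 := by simp [hb]
    have h2btop : (2 : ℝ≥0∞) * sInf S' ≠ ⊤ := by simp [ENNReal.mul_eq_top, hbtop]
    have h3 : v / (2 * sInf S') ≤ sInf S := by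
      apply le_sInf
      intro lam hlam
      exact ENNReal.div_le_of_le_mul (by
        calc v ≤ 2 * (lam * sInf S') := step1 lam hlam
        _ = lam * (2 * sInf S') := by ring)
    calc v ≤ sInf S * (2 * sInf S') := (ENNReal.div_le_iff h2b0 h2btop).mp h3
    _ = 2 * (sInf S * sInf S') := by ring

lemma holder_indicator {n : ℕ} (q : Rn n → ℝ) (hqm : Measurable q) (hq1 : ∀ x, 1 < q x)
    (w : Rn n → ℝ) (hw : Measurable w) (hwpos : ∀ x, 0 < w x)
    (A : Set (Rn n)) (hA : MeasurableSet A)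
    (hN : varNorm q (A.indicator fun x => ENNReal.ofReal (w x ^ (1 / q x))) ≠ 0)
    (hN' : varNorm (fun x => q x / (q x - 1))
      (A.indicator fun x => ENNReal.ofReal (w x ^ (-(1 / q x)))) ≠ 0) :
    volume A ≤ 2 * (varNorm q (A.indicator fun x => ENNReal.ofReal (w x ^ (1 / q x))) *
      varNorm (fun x => q x / (q x - 1))
        (A.indicator fun x => ENNReal.ofReal (w x ^ (-(1 / q x))))) := by
  set f : Rn n → ℝ≥0∞ := A.indicator fun x => ENNReal.ofReal (w x ^ (1 / q x)) with hfdef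
  set g : Rn n → ℝ≥0∞ := A.indicator fun x => ENNReal.ofReal (w x ^ (-(1 / q x))) with hgdef
  set q' : Rn n → ℝ := fun x => q x / (q x - 1) with hq'def
  have hq'1 : ∀ x, 1 < q' x := fun x => (Real.HolderConjugate.conjExponent (hq1 x)).symm.lt
  have hfm : Measurable f :=
    ((hw.pow (measurable_const.div hqm)).ennreal_ofReal).indicator hA
  have hgm : Measurable g :=
    ((hw.pow ((measurable_const.div hqm).neg)).ennreal_ofReal).indicator hA
  refine le_two_mul_sInf_sInf (fun lam h => h.1) hN hN' ?_
  rintro lam ⟨hlam0, hlamI⟩ mu ⟨hmu0, hmuI⟩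
  by_cases htop : lam = ⊤ ∨ mu = ⊤
  · have : 2 * (lam * mu) = ⊤ := by
      rcases htop with h | h <;> subst h <;>
        simp [ENNReal.top_mul, ENNReal.mul_top, hlam0.ne', hmu0.ne', ENNReal.mul_eq_top]
    rw [this]; exact le_top
  push_neg at htop
  obtain ⟨hlamtop, hmutop⟩ := htop
  have key : ∀ x, A.indicator (fun _ => (1 : ℝ≥0∞)) x
      ≤ (lam * mu) * ((f x / lam) ^ q x + (g x / mu) ^ q' x) := by
    intro x
    by_cases hx : x ∈ A
    · rw [Set.indicator_of_mem hx]
      have hfg : f x * g x = 1 := by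
        rw [hfdef, hgdef, Set.indicator_of_mem hx, Set.indicator_of_mem hx,
          ← ENNReal.ofReal_mul (Real.rpow_nonneg (hwpos x).le _),
          ← Real.rpow_add (hwpos x), add_neg_cancel, Real.rpow_zero, ENNReal.ofReal_one]
      have hconj : (q x).HolderConjugate (q' x) :=
        Real.HolderConjugate.conjExponent (hq1 x)
      calc (1 : ℝ≥0∞) = f x * g x := hfg.symm
      _ = (lam * mu) * ((f x / lam) * (g x / mu)) := by
          rw [mul_mul_mul_comm, ENNReal.mul_div_cancel hlam0.ne' hlamtop,
            ENNReal.mul_div_cancel hmu0.ne' hmutop]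
      _ ≤ (lam * mu) * ((f x / lam) ^ q x / ENNReal.ofReal (q x)
            + (g x / mu) ^ q' x / ENNReal.ofReal (q' x)) :=
          mul_le_mul_right (ENNReal.young_inequality _ _ hconj) _
      _ ≤ (lam * mu) * ((f x / lam) ^ q x + (g x / mu) ^ q' x) := by
          refine mul_le_mul_right (add_le_add ?_ ?_) _ <;>
            exact ENNReal.div_le_of_le_mul
              (le_mul_of_one_le_right zero_le (ENNReal.one_le_ofReal.mpr (by
                first
                  | exact (hq1 x).le
                  | exact (hq'1 x).le)))
    · rw [Set.indicator_of_notMem hx]; exact zero_le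
  have hum : Measurable fun x => (f x / lam) ^ q x := (hfm.div_const lam).pow hqm
  have hmultop : lam * mu ≠ ⊤ := by simp [ENNReal.mul_eq_top, hlamtop, hmutop]
  calc volume A = ∫⁻ x, A.indicator (fun _ => (1 : ℝ≥0∞)) x := by
        rw [lintegral_indicator_const hA, one_mul]
  _ ≤ ∫⁻ x, (lam * mu) * ((f x / lam) ^ q x + (g x / mu) ^ q' x) := lintegral_mono key
  _ = (lam * mu) * ((∫⁻ x, (f x / lam) ^ q x) + ∫⁻ x, (g x / mu) ^ q' x) := by
        rw [lintegral_const_mul' _ _ hmultop, lintegral_add_left hum]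
  _ ≤ (lam * mu) * (1 + 1) := mul_le_mul_right (add_le_add hlamI hmuI) _
  _ = 2 * (lam * mu) := by ring

lemma varNorm_indicator_rpow {n : ℕ} (p : Rn n → ℝ) (hp : ∀ x, 0 < p x) (r : ℝ) (hr : 0 < r)
    (w : Rn n → ℝ) (hwpos : ∀ x, 0 < w x) (A : Set (Rn n)) :
    varNorm p (A.indicator fun x => ENNReal.ofReal (w x ^ (1 / p x)))
      = (varNorm (fun x => r * p x)
          (A.indicator fun x => ENNReal.ofReal (w x ^ (1 / (r * p x))))) ^ r := by
  have hq : ∀ x, 0 < r * p x := fun x => mul_pos hr (hp x)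
  have norm : ∀ (t : Rn n → ℝ), (∀ x, 0 < t x) → ∀ lam : ℝ≥0∞, ∀ x,
      (A.indicator (fun y => ENNReal.ofReal (w y ^ (1 / t y))) x / lam) ^ t x
        = A.indicator (fun y => ENNReal.ofReal (w y) / lam ^ t y) x := by
    intro t ht lam x
    by_cases hx : x ∈ A
    · rw [Set.indicator_of_mem hx, Set.indicator_of_mem hx,
        ENNReal.div_rpow_of_nonneg _ _ (ht x).le,
        ENNReal.ofReal_rpow_of_pos (Real.rpow_pos_of_pos (hwpos x) _),
        ← Real.rpow_mul (hwpos x).le, one_div_mul_cancel (ht x).ne', Real.rpow_one]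
    · rw [Set.indicator_of_notMem hx, Set.indicator_of_notMem hx,
        ENNReal.zero_div, ENNReal.zero_rpow_of_pos (ht x)]
  set S : Set ℝ≥0∞ := {lam | 0 < lam ∧
    (∫⁻ x, (A.indicator (fun y => ENNReal.ofReal (w y ^ (1 / p y))) x / lam) ^ p x) ≤ 1}
    with hSdef
  set T : Set ℝ≥0∞ := {lam | 0 < lam ∧
    (∫⁻ x, (A.indicator (fun y => ENNReal.ofReal (w y ^ (1 / (r * p y)))) x / lam)
      ^ (r * p x)) ≤ 1} with hTdef
  have happ : ∀ x : ℝ≥0∞, ENNReal.orderIsoRpow r hr x = x ^ r := fun _ => rfl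
  have himg : ENNReal.orderIsoRpow r hr '' T = S := by
    ext lam
    constructor
    · rintro ⟨mu, ⟨hmu0, hmuI⟩, rfl⟩
      rw [show ∀ (a : ℝ≥0∞) (s : Set ℝ≥0∞), (a ∈ s) = s a from fun _ _ => rfl, happ]
      constructor
      · simp only [pos_iff_ne_zero, Ne, ENNReal.rpow_eq_zero_iff_of_pos hr]
        exact hmu0.ne'
      · calc (∫⁻ x, (A.indicator (fun y => ENNReal.ofReal (w y ^ (1 / p y))) x / mu ^ r) ^ p x)
            = ∫⁻ x, (A.indicator (fun y => ENNReal.ofReal (w y ^ (1 / (r * p y)))) x / mu)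
                ^ (r * p x) := by
              refine lintegral_congr fun x => ?_
              rw [norm p hp (mu ^ r) x, norm (fun y => r * p y) hq mu x]
              by_cases hx : x ∈ A
              · rw [Set.indicator_of_mem hx, Set.indicator_of_mem hx, ← ENNReal.rpow_mul]
              · rw [Set.indicator_of_notMem hx, Set.indicator_of_notMem hx]
        _ ≤ 1 := hmuI
    · rintro ⟨hlam0, hlamI⟩
      refine ⟨lam ^ (1 / r), ⟨?_, ?_⟩, ?_⟩
      · rw [pos_iff_ne_zero, Ne, ENNReal.rpow_eq_zero_iff_of_pos (one_div_pos.mpr hr)]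
        exact hlam0.ne'
      · calc (∫⁻ x, (A.indicator (fun y => ENNReal.ofReal (w y ^ (1 / (r * p y)))) x
              / lam ^ (1 / r)) ^ (r * p x))
            = ∫⁻ x, (A.indicator (fun y => ENNReal.ofReal (w y ^ (1 / p y))) x / lam) ^ p x := by
              refine lintegral_congr fun x => ?_
              rw [norm p hp lam x, norm (fun y => r * p y) hq (lam ^ (1 / r)) x]
              by_cases hx : x ∈ A
              · rw [Set.indicator_of_mem hx, Set.indicator_of_mem hx, ← ENNReal.rpow_mul]
                have : 1 / r * (r * p x) = p x := by field_simp
                rw [this]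
              · rw [Set.indicator_of_notMem hx, Set.indicator_of_notMem hx]
        _ ≤ 1 := hlamI
      · rw [happ, ← ENNReal.rpow_mul, one_div_mul_cancel hr.ne', ENNReal.rpow_one]
  have : varNorm p (A.indicator fun x => ENNReal.ofReal (w x ^ (1 / p x))) = sInf S := rfl
  rw [this, ← himg, sInf_image, ← OrderIso.map_sInf]
  rfl
theorem ball_norm_ratio_estimate
    (n : ℕ) (hn : 0 < n) (p : Rn n → ℝ) (hP : isPclass p) (hLH : isLH p)
    (r : ℝ) (hr0 : 0 < r) (hr1 : r < 1)
    (hrp : ∃ pm : ℝ, (∀ x, pm ≤ p x) ∧ 1 < r * pm)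
    (w : Rn n → ℝ) (hw : Measurable w) (hwpos : ∀ x, 0 < w x)
    (hA : isMuckenhoupt (fun x => r * p x) w) :
    ∃ C : ℝ, 0 < C ∧ ∀ k l : ℤ, l ≤ k →
      wNorm p w ((Bk k).indicator (fun _ => (1 : ℝ≥0∞))) /
          wNorm p w ((Bk l).indicator (fun _ => (1 : ℝ≥0∞)))
        ≤ ENNReal.ofReal C * (2 : ℝ≥0∞) ^ (((k - l : ℤ) : ℝ) * n * r) := by
  classical
  obtain ⟨hpMeas, pm', pp, hpm'1, hbd⟩ := hP
  obtain ⟨pm, hpmle, hrpm⟩ := hrp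
  set q : Rn n → ℝ := fun x => r * p x with hqdef
  have hqle : ∀ x, r * pm ≤ q x := fun x => mul_le_mul_of_nonneg_left (hpmle x) hr0.le
  have hq1 : ∀ x, 1 < q x := fun x => lt_of_lt_of_le hrpm (hqle x)
  have hq0 : ∀ x, 0 < q x := fun x => lt_trans one_pos (hq1 x)
  have hp0 : ∀ x, 0 < p x := fun x => lt_trans zero_lt_one (lt_of_lt_of_le hpm'1 (hbd x).1)
  have hqm : Measurable q := measurable_const.mul hpMeas
  have hq'1 : ∀ x, 1 < q x / (q x - 1) := fun x =>
    (Real.HolderConjugate.conjExponent (hq1 x)).symm.lt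
  haveI : Nontrivial (Rn n) := Module.nontrivial_of_finrank_pos (R := ℝ)
    (by rw [finrank_euclideanSpace_fin]; exact hn)
  set K0 : ℝ≥0∞ := ⨆ (c : Rn n) (R : ℝ) (_ : 0 < R),
      varNorm q ((ball c R).indicator fun x => ENNReal.ofReal (w x ^ (1 / q x))) *
        varNorm (fun x => q x / (q x - 1))
          ((ball c R).indicator fun x => ENNReal.ofReal (w x ^ (-(1 / q x))))
        / volume (ball c R) with hK0def
  have hK0top : K0 ≠ ⊤ := hA.ne
  have hAball : ∀ (c : Rn n) (R : ℝ), 0 < R →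
      varNorm q ((ball c R).indicator fun x => ENNReal.ofReal (w x ^ (1 / q x))) *
        varNorm (fun x => q x / (q x - 1))
          ((ball c R).indicator fun x => ENNReal.ofReal (w x ^ (-(1 / q x))))
        ≤ K0 * volume (ball c R) := by
    intro c R hR
    have h1 : varNorm q ((ball c R).indicator fun x => ENNReal.ofReal (w x ^ (1 / q x))) *
        varNorm (fun x => q x / (q x - 1))
          ((ball c R).indicator fun x => ENNReal.ofReal (w x ^ (-(1 / q x))))
        / volume (ball c R) ≤ K0 :=
      le_iSup_of_le c (le_iSup_of_le R (le_iSup_of_le hR le_rfl))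
    exact (ENNReal.div_le_iff (measure_ball_pos volume c hR).ne' measure_ball_lt_top.ne).mp h1
  set C : ℝ := (2 * (K0.toReal + 1)) ^ r * 2 ^ ((n : ℝ) * r) with hCdef
  have hK0tR : 0 ≤ K0.toReal := ENNReal.toReal_nonneg
  refine ⟨C, by positivity, ?_⟩
  intro k l hkl
  set U : Set (Rn n) := ball 0 ((2 : ℝ) ^ (k + 1 : ℤ)) with hUdef
  have h2k : (0 : ℝ) < 2 ^ (k : ℤ) := zpow_pos two_pos k
  have h2k1 : (2 : ℝ) ^ (k : ℤ) < 2 ^ (k + 1 : ℤ) := by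
    rw [zpow_add_one₀ (two_ne_zero)]
    exact lt_mul_of_one_lt_right h2k one_lt_two
  have hEkU : Bk (n := n) k ⊆ U := closedBall_subset_ball h2k1
  have hBlU : Bk (n := n) l ⊆ Bk (n := n) k :=
    closedBall_subset_closedBall (zpow_le_zpow_right₀ one_le_two hkl)
  have hgqmeas : Measurable fun x => ENNReal.ofReal (w x ^ (1 / q x)) :=
    (hw.pow (measurable_const.div hqm)).ennreal_ofReal
  have hgq'meas : Measurable fun x => ENNReal.ofReal (w x ^ (-(1 / q x))) :=
    (hw.pow ((measurable_const.div hqm).neg)).ennreal_ofReal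
  have hgqpos : ∀ x, 0 < ENNReal.ofReal (w x ^ (1 / q x)) := fun x =>
    ENNReal.ofReal_pos.mpr (Real.rpow_pos_of_pos (hwpos x) _)
  have hgq'pos : ∀ x, 0 < ENNReal.ofReal (w x ^ (-(1 / q x))) := fun x =>
    ENNReal.ofReal_pos.mpr (Real.rpow_pos_of_pos (hwpos x) _)
  have volBl_pos : 0 < volume (Bk (n := n) l) :=
    lt_of_lt_of_le (measure_ball_pos volume 0 (zpow_pos two_pos l))
      (measure_mono ball_subset_closedBall)
  have volBl_top : volume (Bk (n := n) l) ≠ ⊤ := measure_closedBall_lt_top.ne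
  set Nk : ℝ≥0∞ := varNorm q ((Bk k).indicator fun x => ENNReal.ofReal (w x ^ (1 / q x)))
    with hNkdef
  set Nl : ℝ≥0∞ := varNorm q ((Bk l).indicator fun x => ENNReal.ofReal (w x ^ (1 / q x)))
    with hNldef
  set NU : ℝ≥0∞ := varNorm q (U.indicator fun x => ENNReal.ofReal (w x ^ (1 / q x)))
    with hNUdef
  set N'l : ℝ≥0∞ := varNorm (fun x => q x / (q x - 1))
    ((Bk l).indicator fun x => ENNReal.ofReal (w x ^ (-(1 / q x)))) with hN'ldef
  set N'U : ℝ≥0∞ := varNorm (fun x => q x / (q x - 1))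
    (U.indicator fun x => ENNReal.ofReal (w x ^ (-(1 / q x)))) with hN'Udef
  have hNl0 : Nl ≠ 0 :=
    varNorm_indicator_pos q (r * pm) (zero_lt_one.trans hrpm) hqle _
      measurableSet_closedBall volBl_pos _ hgqmeas hgqpos
  have hN'l0 : N'l ≠ 0 :=
    varNorm_indicator_pos (fun x => q x / (q x - 1)) 1 one_pos (fun x => (hq'1 x).le) _
      measurableSet_closedBall volBl_pos _ hgq'meas hgq'pos
  have hHold : volume (Bk (n := n) l) ≤ 2 * (Nl * N'l) :=
    holder_indicator q hqm hq1 w hw hwpos _ measurableSet_closedBall hNl0 hN'l0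
  have hNkNU : Nk ≤ NU :=
    varNorm_mono q (fun x => (hq0 x).le) fun x =>
      Set.indicator_le_indicator_of_subset hEkU (fun y => zero_le) x
  have hN'lU : N'l ≤ N'U :=
    varNorm_mono _ (fun x => (lt_trans one_pos (hq'1 x)).le) fun x =>
      Set.indicator_le_indicator_of_subset (hBlU.trans hEkU) (fun y => zero_le) x
  have hAU : NU * N'U ≤ K0 * volume U := hAball 0 _ (zpow_pos two_pos (k + 1))
  have hτpos : (0 : ℝ) < (2 : ℝ) ^ (k + 1 - l : ℤ) := zpow_pos two_pos _
  have hvolU : volume U = ENNReal.ofReal (((2 : ℝ) ^ (k + 1 - l : ℤ)) ^ n)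
      * volume (Bk (n := n) l) := by
    rw [hUdef, Bk, Measure.addHaar_ball volume 0 (zpow_pos two_pos (k + 1 : ℤ)).le,
      Measure.addHaar_closedBall volume 0 (zpow_pos two_pos l).le,
      finrank_euclideanSpace_fin, ← mul_assoc,
      ← ENNReal.ofReal_mul (by positivity)]
    congr 2
    rw [← mul_pow, ← zpow_add₀ (two_ne_zero : (2:ℝ) ≠ 0)]
    congr 2
    omega
  set D : ℝ≥0∞ := 2 * K0 * ENNReal.ofReal (((2 : ℝ) ^ (k + 1 - l : ℤ)) ^ n) with hDdef
  have hchain : Nk * volume (Bk (n := n) l) ≤ D * Nl * volume (Bk (n := n) l) := by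
    calc Nk * volume (Bk (n := n) l) ≤ NU * volume (Bk (n := n) l) :=
          mul_le_mul_left hNkNU _
    _ ≤ NU * (2 * (Nl * N'l)) := mul_le_mul_right hHold _
    _ = 2 * Nl * (NU * N'l) := by ring
    _ ≤ 2 * Nl * (NU * N'U) := mul_le_mul_right (mul_le_mul_right hN'lU _) _
    _ ≤ 2 * Nl * (K0 * volume U) := mul_le_mul_right hAU _
    _ = D * Nl * volume (Bk (n := n) l) := by rw [hvolU, hDdef]; ring
  have hNkD : Nk ≤ D * Nl :=
    (ENNReal.mul_le_mul_iff_left volBl_pos.ne' volBl_top).mp hchain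
  have hwn : ∀ j : ℤ, wNorm p w ((Bk (n := n) j).indicator fun _ => (1 : ℝ≥0∞))
      = (varNorm q ((Bk j).indicator fun x => ENNReal.ofReal (w x ^ (1 / q x)))) ^ r := by
    intro j
    have h1 : (fun x => (Bk (n := n) j).indicator (fun _ => (1 : ℝ≥0∞)) x
          * ENNReal.ofReal (w x ^ (1 / p x)))
        = (Bk j).indicator fun x => ENNReal.ofReal (w x ^ (1 / p x)) := by
      funext x
      by_cases hx : x ∈ Bk (n := n) j <;>
        simp [Set.indicator_of_mem, Set.indicator_of_notMem, hx]
    rw [wNorm, h1, varNorm_indicator_rpow p hp0 r hr0 w hwpos]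
  rw [hwn k, hwn l]
  have hratio : Nk ^ r / Nl ^ r ≤ D ^ r := by
    rw [← ENNReal.div_rpow_of_nonneg _ _ hr0.le]
    refine ENNReal.rpow_le_rpow ?_ hr0.le
    calc Nk / Nl ≤ D * Nl / Nl := ENNReal.div_le_div_right hNkD _
    _ = D * (Nl / Nl) := by rw [mul_div_assoc]
    _ ≤ D * 1 := mul_le_mul_right ENNReal.div_self_le_one _
    _ = D := mul_one _
  refine hratio.trans ?_
  have hD_le : D ≤ ENNReal.ofReal ((2 * (K0.toReal + 1))
      * ((2 : ℝ) ^ (k + 1 - l : ℤ)) ^ n) := by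
    have hK : K0 ≤ ENNReal.ofReal (K0.toReal + 1) := by
      conv_lhs => rw [← ENNReal.ofReal_toReal hK0top]
      exact ENNReal.ofReal_le_ofReal (by linarith)
    calc D ≤ 2 * ENNReal.ofReal (K0.toReal + 1)
          * ENNReal.ofReal (((2 : ℝ) ^ (k + 1 - l : ℤ)) ^ n) :=
        mul_le_mul_left (mul_le_mul_right hK 2) _
    _ = ENNReal.ofReal ((2 * (K0.toReal + 1)) * ((2 : ℝ) ^ (k + 1 - l : ℤ)) ^ n) := by
        rw [← ENNReal.ofReal_ofNat 2, ← ENNReal.ofReal_mul (by norm_num),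
          ← ENNReal.ofReal_mul (by positivity)]
  have hstep : D ^ r ≤ ENNReal.ofReal (((2 * (K0.toReal + 1))
      * ((2 : ℝ) ^ (k + 1 - l : ℤ)) ^ n) ^ r) := by
    rw [← ENNReal.ofReal_rpow_of_pos (by positivity)]
    exact ENNReal.rpow_le_rpow hD_le hr0.le
  refine hstep.trans ?_
  have hreal : ((2 * (K0.toReal + 1)) * ((2 : ℝ) ^ (k + 1 - l : ℤ)) ^ n) ^ r
      = C * 2 ^ (((k - l : ℤ) : ℝ) * n * r) := by
    rw [Real.mul_rpow (by positivity) (by positivity)]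
    have h1 : ((2 : ℝ) ^ (k + 1 - l : ℤ)) ^ n = (2 : ℝ) ^ ((((k + 1 - l) * n : ℤ)) : ℝ) := by
      rw [← zpow_natCast ((2 : ℝ) ^ (k + 1 - l : ℤ)) n, ← zpow_mul, Real.rpow_intCast]
    rw [h1, ← Real.rpow_mul (by norm_num : (0:ℝ) ≤ 2), hCdef, mul_assoc,
      ← Real.rpow_add two_pos]
    congr 1
    push_cast
    ring
  rw [hreal, ENNReal.ofReal_mul (by positivity), ← ENNReal.ofReal_rpow_of_pos two_pos,
    ENNReal.ofReal_ofNat]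

end
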